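/- Let K be a field of characteristic different from 2 and π an n-fold Pfister form over K. Then G(π) equals the set of nonzero values represented by π: a nonzero scalar λ satisfies λπ ≅ π if and only if π represents λ. -/

import Mathlib

open QuadraticMap TensorProduct Module

/-- Diagonal quadratic form ⟨a 0, …, a (n-1)⟩. -/
noncomputable def diagF (K : Type) [Field K] {n : ℕ} (a : Fin n → K) :
    QuadraticForm K (Fin n → K) :=
  QuadraticMap.weightedSumSquares K a

/-- Orthogonal sum of m hyperbolic planes ⟨1,−1,1,−1,…⟩. -/
noncomputable def hypF (K : Type) [Field K] (m : ℕ) :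
    QuadraticForm K (Fin (2 * m) → K) :=
  QuadraticMap.weightedSumSquares K (fun i : Fin (2 * m) => (-1 : K) ^ (i : ℕ))

/-- A form is hyperbolic if it is isometric to a sum of hyperbolic planes. -/
def IsHyp (K : Type) [Field K] {V : Type} [AddCommGroup V] [Module K V]
    (Q : QuadraticForm K V) : Prop :=
  ∃ m : ℕ, QuadraticMap.Equivalent Q (hypF K m)

/-- Regularity (non-degeneracy) of a quadratic form, via its polar bilinear form. -/
def RegularQF (K : Type) [Field K] {V : Type} [AddCommGroup V] [Module K V]
    (Q : QuadraticForm K V) : Prop :=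
  (QuadraticMap.polarBilin Q).Nondegenerate

/-- Witt index: largest dimension of a totally isotropic subspace. -/
noncomputable def wIdx (K : Type) [Field K] {V : Type} [AddCommGroup V] [Module K V]
    (Q : QuadraticForm K V) : ℕ :=
  sSup {m : ℕ | ∃ W : Submodule K V, Module.finrank K W = m ∧ ∀ v ∈ W, Q v = 0}

/-- The n-fold Pfister form ⟪a 0, …, a (n-1)⟫. -/
noncomputable def pfister (K : Type) [Field K] {n : ℕ} (a : Fin n → K) :
    QuadraticForm K ((Fin n → Bool) → K) :=
  QuadraticMap.weightedSumSquares K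
    (fun s : Fin n → Bool => ∏ i : Fin n, if s i then -a i else 1)

/-- Witt equivalence of two quadratic forms. -/
def WittEquiv (K : Type) [Field K] {V W : Type} [AddCommGroup V] [Module K V]
    [AddCommGroup W] [Module K W] (Q₁ : QuadraticForm K V) (Q₂ : QuadraticForm K W) : Prop :=
  ∃ m₁ m₂ : ℕ, QuadraticMap.Equivalent (Q₁.prod (hypF K m₁)) (Q₂.prod (hypF K m₂))

/-- Orthogonal sum of a family of n-fold Pfister forms. -/
noncomputable def pfisterSum (K : Type) [Field K] {n k : ℕ} (a : Fin k → Fin n → K) :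
    QuadraticForm K (Fin k → (Fin n → Bool) → K) :=
  QuadraticMap.pi (fun j : Fin k => pfister K (a j))

/-- The Witt class of Q lies in the n-th power Iⁿ(K) of the fundamental ideal:
Q together with some sum of n-fold Pfister forms is Witt equivalent to another
sum of n-fold Pfister forms. -/
def InI (K : Type) [Field K] (n : ℕ) {V : Type} [AddCommGroup V] [Module K V]
    (Q : QuadraticForm K V) : Prop :=
  ∃ (k₁ k₂ : ℕ) (a₁ : Fin k₁ → Fin n → K) (a₂ : Fin k₂ → Fin n → K),
    (∀ j i, a₁ j i ≠ 0) ∧ (∀ j i, a₂ j i ≠ 0) ∧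
      WittEquiv K (Q.prod (pfisterSum K a₁)) (pfisterSum K a₂)

/-- A field extension of K, bundled. -/
structure FieldExt (K : Type) [Field K] where
  carrier : Type
  [field : Field carrier]
  [alg : Algebra K carrier]

attribute [instance] FieldExt.field FieldExt.alg
namespace PfisterAux

variable {K : Type} [Field K]

noncomputable abbrev qd {ι : Type} [Fintype ι] (w : ι → K) : QuadraticForm K (ι → K) :=
  QuadraticMap.weightedSumSquares K w

lemma qd_apply {ι : Type} [Fintype ι] (w : ι → K) (v : ι → K) :
    qd w v = ∑ i, w i * (v i * v i) := by
  simp [QuadraticMap.weightedSumSquares_apply, smul_eq_mul]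

lemma qd_congr {ι : Type} [Fintype ι] {w₁ w₂ : ι → K} (h : ∀ i, w₁ i = w₂ i) :
    qd w₁ = qd w₂ := congrArg _ (funext h)

lemma smul_qd {ι : Type} [Fintype ι] (c : K) (w : ι → K) :
    c • qd w = qd (fun i => c * w i) := by
  ext v
  simp only [QuadraticMap.smul_apply, qd_apply, smul_eq_mul, Finset.mul_sum]
  exact Finset.sum_congr rfl fun i _ => by ring

lemma equiv_of_lequiv {ι ι' : Type} [Fintype ι] [Fintype ι'] (w : ι → K) (w' : ι' → K)
    (e : (ι → K) ≃ₗ[K] (ι' → K)) (h : ∀ x, qd w' (e x) = qd w x) :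
    (qd w).Equivalent (qd w') :=
  ⟨{ e with map_app' := h }⟩

lemma equiv_smul {V W : Type} [AddCommGroup V] [Module K V] [AddCommGroup W] [Module K W]
    {Q₁ : QuadraticForm K V} {Q₂ : QuadraticForm K W} (c : K) (h : Q₁.Equivalent Q₂) :
    (c • Q₁).Equivalent (c • Q₂) := by
  obtain ⟨f⟩ := h
  exact ⟨{ f.toLinearEquiv with
    map_app' := fun m => by
      simp only [QuadraticMap.smul_apply]
      exact congrArg (fun z => c • z) (f.map_app m) }⟩

lemma equiv_mulweight {ι ι' : Type} [Fintype ι] [Fintype ι'] (c : K) {w₁ : ι → K} {w₂ : ι' → K}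
    (h : (qd w₁).Equivalent (qd w₂)) :
    (qd fun i => c * w₁ i).Equivalent (qd fun i => c * w₂ i) := by
  have := equiv_smul c h
  rwa [smul_qd, smul_qd] at this

lemma equiv_reindex {ι ι' : Type} [Fintype ι] [Fintype ι'] (e : ι' ≃ ι) (w : ι → K) :
    (qd (fun i => w (e i))).Equivalent (qd w) := by
  refine equiv_of_lequiv _ _
    { toFun := fun x i => x (e.symm i)
      invFun := fun y i' => y (e i')
      map_add' := fun x y => rfl
      map_smul' := fun c x => rfl
      left_inv := fun x => by funext i; simp
      right_inv := fun y => by funext i; simp } ?_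
  intro x
  rw [qd_apply, qd_apply]
  refine (Fintype.sum_equiv e _ _ fun i' => ?_).symm
  simp

lemma equiv_sq_scale {ι : Type} [Fintype ι] (c : K) (hc : c ≠ 0) (w : ι → K) :
    (qd (fun i => c ^ 2 * w i)).Equivalent (qd w) := by
  refine equiv_of_lequiv _ _
    { toFun := fun x i => c * x i
      invFun := fun y i => c⁻¹ * y i
      map_add' := fun x y => by funext i; simp [mul_add]
      map_smul' := fun d x => by funext i; simp [smul_eq_mul]; ring
      left_inv := fun x => by funext i; field_simp
      right_inv := fun y => by funext i; field_simp } ?_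
  intro x
  rw [qd_apply, qd_apply]
  refine Finset.sum_congr rfl fun i _ => ?_
  show w i * ((c * x i) * (c * x i)) = c ^ 2 * w i * (x i * x i)
  ring

lemma equiv_block {ι : Type} [Fintype ι] (W₁ W₂ : Bool × ι → K)
    (h : ∀ b, (qd (fun t => W₁ (b, t))).Equivalent (qd fun t => W₂ (b, t))) :
    (qd W₁).Equivalent (qd W₂) := by
  have f : ∀ b : Bool, (qd (fun t => W₁ (b, t))).IsometryEquiv (qd fun t => W₂ (b, t)) :=
    fun b => (h b).some
  refine equiv_of_lequiv _ _
    { toFun := fun x p => f p.1 (fun t => x (p.1, t)) p.2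
      invFun := fun y p => (f p.1).symm (fun t => y (p.1, t)) p.2
      map_add' := fun x y => by
        funext p
        have := (f p.1).toLinearEquiv.map_add (fun t => x (p.1, t)) (fun t => y (p.1, t))
        exact congrFun this p.2
      map_smul' := fun c x => by
        funext p
        have := (f p.1).toLinearEquiv.map_smul c (fun t => x (p.1, t))
        exact congrFun this p.2
      left_inv := fun x => by
        funext p
        exact congrFun ((f p.1).toLinearEquiv.symm_apply_apply (fun t' => x (p.1, t'))) p.2
      right_inv := fun y => by
        funext p
        exact congrFun ((f p.1).toLinearEquiv.apply_symm_apply (fun t' => y (p.1, t'))) p.2 } ?_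
  intro x
  rw [qd_apply, qd_apply, Fintype.sum_prod_type, Fintype.sum_prod_type]
  refine Finset.sum_congr rfl fun b _ => ?_
  have := (f b).map_app (fun t => x (b, t))
  rw [qd_apply, qd_apply] at this
  exact this

lemma equiv_congr {ι ι' : Type} [Fintype ι] [Fintype ι'] {w₁ w₂ : ι → K} {w₁' w₂' : ι' → K}
    (h : ∀ i, w₁ i = w₂ i) (h' : ∀ i, w₁' i = w₂' i) (e : (qd w₂).Equivalent (qd w₂')) :
    (qd w₁).Equivalent (qd w₁') := by
  rw [qd_congr h, qd_congr h']; exact e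

lemma equiv_binary {ι : Type} [Fintype ι] (r : ι → K) (u1 u2 c : K)
    (hc : u1 + u2 = c) (hc0 : c ≠ 0) :
    (qd fun p : Bool × ι => cond p.1 (u1 * u2 * c) c * r p.2).Equivalent
      (qd fun p : Bool × ι => cond p.1 u2 u1 * r p.2) := by
  refine equiv_of_lequiv _ _
    { toFun := fun x p => cond p.1 (x (false, p.2) + u1 * x (true, p.2))
        (x (false, p.2) - u2 * x (true, p.2))
      invFun := fun y p => cond p.1 (c⁻¹ * (-y (false, p.2) + y (true, p.2)))
        (c⁻¹ * (u1 * y (false, p.2) + u2 * y (true, p.2)))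
      map_add' := fun x y => by
        funext ⟨bb, τ⟩; cases bb <;>
          · show _ = (_ : K) + _
            simp only [Bool.cond_false, Bool.cond_true, Pi.add_apply]
            ring
      map_smul' := fun d x => by
        funext ⟨bb, τ⟩; cases bb <;>
          · simp only [Bool.cond_false, Bool.cond_true, Pi.smul_apply, smul_eq_mul,
              RingHom.id_apply]
            ring
      left_inv := fun x => by
        funext ⟨bb, τ⟩; cases bb
        · simp only [Bool.cond_false, Bool.cond_true]
          field_simp
          linear_combination x (false, τ) * hc
        · simp only [Bool.cond_false, Bool.cond_true]
          field_simp
          linear_combination x (true, τ) * hc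
      right_inv := fun y => by
        funext ⟨bb, τ⟩; cases bb
        · simp only [Bool.cond_false, Bool.cond_true]
          field_simp
          linear_combination y (false, τ) * hc
        · simp only [Bool.cond_false, Bool.cond_true]
          field_simp
          linear_combination y (true, τ) * hc } ?_
  intro x
  rw [qd_apply, qd_apply]
  simp only [LinearEquiv.coe_mk, LinearMap.coe_mk, AddHom.coe_mk, Fintype.sum_prod_type,
    Fintype.sum_bool, Bool.cond_false, Bool.cond_true]
  rw [← Finset.sum_add_distrib, ← Finset.sum_add_distrib]
  refine Finset.sum_congr rfl fun τ _ => ?_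
  linear_combination (r τ * (x (false, τ) * x (false, τ) + u1 * u2 * (x (true, τ) * x (true, τ)))) * hc

theorem pf_round (n : ℕ) : ∀ (a : Fin n → K), (∀ i, a i ≠ 0) → ∀ lam : K, lam ≠ 0 →
    ∀ v : (Fin n → Bool) → K, pfister K a v = lam →
    (lam • pfister K a).Equivalent (pfister K a) := by
  induction n with
  | zero =>
    intro a ha lam hlam v hv
    have hval : lam = v default * v default := by
      rw [← hv]
      show qd (fun s : Fin 0 → Bool => ∏ i : Fin 0, if s i then -a i else 1) v = _
      rw [qd_apply, Fintype.sum_unique]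
      simp only [Finset.univ_eq_empty, Finset.prod_empty, one_mul]
      exact congrArg (fun z => v z * v z) (Subsingleton.elim _ _)
    have hv0 : v default ≠ 0 := fun h => hlam (by rw [hval, h, mul_zero])
    have key : (qd fun s : Fin 0 → Bool =>
        lam * ((fun s : Fin 0 → Bool => ∏ i : Fin 0, if s i then -a i else 1) s)).Equivalent
        (qd fun s : Fin 0 → Bool => ∏ i : Fin 0, if s i then -a i else 1) := by
      refine equiv_congr (fun s => ?_) (fun s => rfl)
        (equiv_sq_scale (v default) hv0 (fun s : Fin 0 → Bool => ∏ i : Fin 0, if s i then -a i else 1))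
      rw [hval]; ring
    have h2 : (lam • qd (fun s : Fin 0 → Bool => ∏ i : Fin 0, if s i then -a i else 1)).Equivalent
        (qd fun s : Fin 0 → Bool => ∏ i : Fin 0, if s i then -a i else 1) := by
      rw [smul_qd]; exact key
    exact h2
  | succ n ih =>
    intro a ha lam hlam v hv
    set b : K := a (Fin.last n) with hb
    have hbne : b ≠ 0 := ha _
    set r : (Fin n → Bool) → K := fun t => ∏ i : Fin n, if t i then -a i.castSucc else 1 with hr
    set W : Bool × (Fin n → Bool) → K := fun p => cond p.1 (-b) 1 * r p.2 with hW
    have hWE : ∀ s : Fin (n + 1) → Bool,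
        (∏ i : Fin (n + 1), if s i then -a i else 1) = W (s (Fin.last n), fun i => s i.castSucc) := by
      intro s
      show _ = cond (s (Fin.last n)) (-b) 1 * ∏ i : Fin n, if s i.castSucc then -a i.castSucc else 1
      rw [Fin.prod_univ_castSucc, mul_comm]
      congr 1
      cases hsl : s (Fin.last n) <;> simp [hb, hsl]
    let E : (Fin (n + 1) → Bool) ≃ Bool × (Fin n → Bool) :=
      { toFun := fun s => (s (Fin.last n), fun i => s i.castSucc)
        invFun := fun p => Fin.snoc p.2 p.1
        left_inv := fun s => by
          funext i
          refine Fin.lastCases ?_ (fun j => ?_) i <;> simp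
        right_inv := fun p => by
          refine Prod.ext ?_ ?_ <;> simp }
    have roundR : ∀ mu : K, mu ≠ 0 → (∃ u, qd r u = mu) →
        (qd fun t => mu * r t).Equivalent (qd r) := by
      rintro mu hmu ⟨u, hu⟩
      have h0 : ∀ i : Fin n, a i.castSucc ≠ 0 := fun i => ha _
      have h1 := ih (fun i => a i.castSucc) h0 mu hmu u hu
      have h3 : (mu • qd r).Equivalent (qd r) := h1
      rw [smul_qd] at h3
      exact h3
    set v' : Bool × (Fin n → Bool) → K := fun p => v (E.symm p) with hv'def
    have hv' : qd W v' = lam := by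
      rw [← hv]
      show _ = qd (fun s : Fin (n+1) → Bool => ∏ i, if s i then -a i else 1) v
      rw [qd_apply, qd_apply]
      refine (Fintype.sum_equiv E _ _ ?_).symm
      intro s
      have h1 : v' (E s) = v s := congrArg v (E.left_inv s)
      rw [h1]
      exact congrArg (· * (v s * v s)) (hWE s)
    set x : K := qd r (fun t => v' (false, t)) with hxd
    set y : K := qd r (fun t => v' (true, t)) with hyd
    have hxy : x + -b * y = lam := by
      rw [← hv', qd_apply]
      simp only [Fintype.sum_prod_type, Fintype.sum_bool]
      have e1 : ∀ bb : Bool, (∑ t, W (bb, t) * (v' (bb, t) * v' (bb, t)))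
          = cond bb (-b) 1 * qd r (fun t => v' (bb, t)) := by
        intro bb
        rw [qd_apply, Finset.mul_sum]
        refine Finset.sum_congr rfl fun t _ => ?_
        show cond bb (-b) 1 * r t * _ = cond bb (-b) 1 * (r t * _)
        ring
      rw [e1 true, e1 false, ← hxd, ← hyd]
      show x + -b * y = -b * y + 1 * x
      ring
    -- reduce to a statement about W
    suffices KEY : (qd fun p => lam * W p).Equivalent (qd W) by
      have hπ : pfister K a = qd (fun s => W (E s)) :=
        qd_congr (fun s => hWE s)
      have e1 : (qd fun s => lam * W (E s)).Equivalent (qd fun p => lam * W p) :=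
        equiv_reindex E (fun p => lam * W p)
      have e2 : (qd fun s => W (E s)).Equivalent (qd W) := equiv_reindex E W
      have hfin := (e1.trans KEY).trans e2.symm
      rw [hπ, smul_qd]
      exact hfin
    by_cases hy : y = 0
    · -- lam = x
      have hlx : lam = x := by rw [← hxy, hy]; ring
      refine equiv_block _ _ ?_
      intro bb; cases bb
      · exact equiv_congr (fun t => by show lam * (1 * r t) = lam * r t; ring)
          (fun t => by show (1 : K) * r t = r t; ring)
          (roundR lam hlam ⟨_, hlx ▸ hxd.symm⟩)
      · exact equiv_congr (fun t => by show lam * (-b * r t) = -b * (lam * r t); ring)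
          (fun t => rfl)
          (equiv_mulweight (-b) (roundR lam hlam ⟨_, hlx ▸ hxd.symm⟩))
    · by_cases hx : x = 0
      · -- lam = -b * y
        have hlby : lam = -b * y := by rw [← hxy, hx]; ring
        let sw : Bool × (Fin n → Bool) ≃ Bool × (Fin n → Bool) :=
          { toFun := fun p => (!p.1, p.2)
            invFun := fun p => (!p.1, p.2)
            left_inv := fun p => by simp
            right_inv := fun p => by simp }
        have s1 : (qd fun p : Bool × (Fin n → Bool) => lam * W (sw p)).Equivalent
            (qd fun p => lam * W p) := equiv_reindex sw (fun p => lam * W p)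
        have s2 : (qd fun p : Bool × (Fin n → Bool) => lam * W (sw p)).Equivalent (qd W) := by
          refine equiv_block _ _ ?_
          intro bb; cases bb
          · refine equiv_congr (fun t => ?_) (fun t => by show (1 : K) * r t = r t; ring)
              ((equiv_sq_scale b hbne (fun t => y * r t)).trans (roundR y hy ⟨_, hyd.symm⟩))
            show lam * (-b * r t) = b ^ 2 * (y * r t)
            rw [hlby]; ring
          · refine equiv_congr (fun t => ?_) (fun t => rfl)
              (equiv_mulweight (-b) (roundR y hy ⟨_, hyd.symm⟩))
            show lam * (1 * r t) = -b * (y * r t)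
            rw [hlby]; ring
        exact s1.symm.trans s2
      · -- generic case
        set Wtau : Bool × (Fin n → Bool) → K := fun p => cond p.1 (-(b * x * y)) 1 * r p.2
          with hWtau
        have S1 : (qd fun p : Bool × (Fin n → Bool) =>
            cond p.1 (-b * y) x * r p.2).Equivalent (qd W) := by
          refine equiv_block _ _ ?_
          intro bb; cases bb
          · exact equiv_congr (fun t => rfl) (fun t => by show (1 : K) * r t = r t; ring)
              (roundR x hx ⟨_, hxd.symm⟩)
          · exact equiv_congr (fun t => by show -b * y * r t = -b * (y * r t); ring)
              (fun t => rfl)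
              (equiv_mulweight (-b) (roundR y hy ⟨_, hyd.symm⟩))
        have S2 := equiv_binary r x (-b * y) lam hxy hlam
        have Sc : (qd fun p : Bool × (Fin n → Bool) =>
            cond p.1 (x * (-b * y) * lam) lam * r p.2).Equivalent (qd W) := S2.trans S1
        have S4 : (qd Wtau).Equivalent (qd W) := by
          refine equiv_block _ _ ?_
          intro bb; cases bb
          · exact equiv_congr (fun t => by show (1:K) * r t = 1 * r t; rfl) (fun t => rfl)
              (QuadraticMap.Equivalent.refl _)
          · refine equiv_congr (fun t => ?_) (fun t => rfl)
              (equiv_mulweight (-b)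
                ((equiv_mulweight x (roundR y hy ⟨_, hyd.symm⟩)).trans (roundR x hx ⟨_, hxd.symm⟩)))
            show -(b * x * y) * r t = -b * (x * (y * r t))
            ring
        have g1 : (qd fun p => lam * W p).Equivalent
            (qd fun p : Bool × (Fin n → Bool) =>
              lam * (cond p.1 (x * (-b * y) * lam) lam * r p.2)) :=
          equiv_mulweight lam Sc.symm
        have g2 : (qd fun p : Bool × (Fin n → Bool) =>
            lam * (cond p.1 (x * (-b * y) * lam) lam * r p.2)).Equivalent (qd Wtau) := by
          refine equiv_congr (fun p => ?_) (fun p => rfl) (equiv_sq_scale lam hlam Wtau)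
          rcases p with ⟨bb, t⟩
          cases bb
          · show lam * (lam * r t) = lam ^ 2 * (1 * r t); ring
          · show lam * (x * (-b * y) * lam * r t) = lam ^ 2 * (-(b * x * y) * r t); ring
        exact (g1.trans g2).trans S4
end PfisterAux

/-- Pfister forms are round: λ ∈ G(π) if and only if π represents λ. -/
theorem stmt_17 (K : Type) [Field K] [Invertible (2 : K)] {n : ℕ} (a : Fin n → K)
    (ha : ∀ i, a i ≠ 0) (lam : K) (hlam : lam ≠ 0) :
    QuadraticMap.Equivalent (lam • pfister K a) (pfister K a) ↔
      ∃ v : (Fin n → Bool) → K, pfister K a v = lam := by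
  constructor
  · rintro ⟨f⟩
    refine ⟨f (fun s => if s = (fun _ => false) then 1 else 0), ?_⟩
    have h1 : pfister K a (fun s => if s = (fun _ => false) then (1 : K) else 0) = 1 := by
      show PfisterAux.qd _ _ = 1
      rw [PfisterAux.qd_apply, Finset.sum_eq_single (fun _ : Fin n => false)]
      · simp
      · intro s _ hs; simp [hs]
      · intro hs; exact absurd (Finset.mem_univ _) hs
    rw [f.map_app, QuadraticMap.smul_apply, h1, smul_eq_mul, mul_one]
  · rintro ⟨v, hv⟩
    exact PfisterAux.pf_round n a ha lam hlam v hv
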